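/- Comparison of mass and dual Lipschitz norm on grid points (Theorem 9.2): There exists a constant c(n) ≥ 1, depending only on n, such that for every positive integer k and every function θ : Σ_k → ℝ with Σ_{x∈Σ_k} θ(x) = 0 one has G(θ)/√n ≤ M(θ) ≤ c(n) · k^{2n} · G(θ). -/

import Mathlib

noncomputable section

/-- The grid `Σ_k = [-1,1]ⁿ ∩ (1/k)·ℤⁿ` of the cube of mesh `1/k`. -/
def grid (n k : ℕ) : Set (EuclideanSpace ℝ (Fin n)) :=
  {x | (∀ i, |x i| ≤ 1) ∧ ∀ i, ∃ m : ℤ, x i = m / k}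

/-- Mass of a finitely supported function `θ : ℝⁿ → ℝ`, identified with the atomic
signed measure `Σ_x θ(x)·δ_x`: `M(θ) = Σ_x |θ(x)|`. -/
def massF (n : ℕ) (θ : EuclideanSpace ℝ (Fin n) →₀ ℝ) : ℝ :=
  ∑ x ∈ θ.support, |θ x|

/-- Dual Lipschitz norm of a finitely supported function `θ : ℝⁿ → ℝ`:
`G(θ) = sup { Σ_x θ(x)·φ(x) : φ 1-Lipschitz }`. -/
def GF (n : ℕ) (θ : EuclideanSpace ℝ (Fin n) →₀ ℝ) : ℝ :=
  sSup {r : ℝ | ∃ φ : EuclideanSpace ℝ (Fin n) → ℝ,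
    LipschitzWith 1 φ ∧ r = ∑ x ∈ θ.support, θ x * φ x}

/-- separation of grid points -/
lemma grid_sep {n k : ℕ} (hk : 0 < k) {x y : EuclideanSpace ℝ (Fin n)}
    (hx : x ∈ grid n k) (hy : y ∈ grid n k) (hxy : x ≠ y) :
    1 / (k : ℝ) ≤ dist x y := by
  have hk0 : (0:ℝ) < k := by exact_mod_cast hk
  obtain ⟨i, hi⟩ : ∃ i, x i ≠ y i := by
    by_contra h
    push_neg at h
    exact hxy (PiLp.ext h)
  obtain ⟨a, ha⟩ := hx.2 i
  obtain ⟨b, hb⟩ := hy.2 i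
  have hab : a ≠ b := by
    intro h; apply hi; rw [ha, hb, h]
  have h1 : (1:ℝ) ≤ |(a:ℝ) - b| := by
    have : (1:ℤ) ≤ |a - b| := Int.one_le_abs (sub_ne_zero.mpr hab)
    calc (1:ℝ) ≤ ((|a - b| : ℤ) : ℝ) := by exact_mod_cast this
      _ = |(a:ℝ) - b| := by push_cast [abs_sub_comm]; rw [abs_sub_comm]
  have hdist_i : 1 / (k:ℝ) ≤ dist (x i) (y i) := by
    rw [Real.dist_eq, ha, hb]
    rw [div_sub_div_same, abs_div, abs_of_pos hk0]
    rw [div_le_div_iff₀ hk0 hk0] at *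
    calc (1:ℝ) * k = k := one_mul _
      _ ≤ |(a:ℝ) - b| * k := le_mul_of_one_le_left (le_of_lt hk0) h1
  calc 1 / (k:ℝ) ≤ dist (x i) (y i) := hdist_i
    _ ≤ dist x y := by
        rw [EuclideanSpace.dist_eq]
        have h0 : dist (x i) (y i) = Real.sqrt (dist (x i) (y i) ^ 2) :=
          (Real.sqrt_sq dist_nonneg).symm
        rw [h0]
        apply Real.sqrt_le_sqrt
        apply Finset.single_le_sum (f := fun j => dist (x j) (y j) ^ 2)
          (fun j _ => sq_nonneg _) (Finset.mem_univ i)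

/-- Comparison of mass and dual Lipschitz norm on grid points (Theorem 9.2):
there is `c(n) ≥ 1` such that for every `k ≥ 1` and every finitely supported
`θ` carried by the grid `Σ_k` with `Σ_x θ(x) = 0`,
`G(θ)/√n ≤ M(θ) ≤ c(n)·k^{2n}·G(θ)`. -/
theorem stmt6 (n : ℕ) (hn : 0 < n) :
    ∃ c : ℝ, 1 ≤ c ∧ ∀ k : ℕ, 0 < k →
      ∀ θ : EuclideanSpace ℝ (Fin n) →₀ ℝ,
        ↑θ.support ⊆ grid n k → ∑ x ∈ θ.support, θ x = 0 →
        GF n θ / Real.sqrt n ≤ massF n θ ∧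
        massF n θ ≤ c * (k : ℝ) ^ (2 * n) * GF n θ := by
  refine ⟨4, by norm_num, fun k hk θ hsupp hsum => ?_⟩
  have hk0 : (0:ℝ) < k := by exact_mod_cast hk
  have hsq : (0:ℝ) < Real.sqrt n := Real.sqrt_pos.mpr (by exact_mod_cast hn)
  have hMnonneg : 0 ≤ massF n θ := Finset.sum_nonneg fun x _ => abs_nonneg _
  set S := {r : ℝ | ∃ φ : EuclideanSpace ℝ (Fin n) → ℝ,
    LipschitzWith 1 φ ∧ r = ∑ x ∈ θ.support, θ x * φ x} with hS
  -- every point of the grid has norm ≤ √n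
  have hnormle : ∀ x ∈ θ.support, ‖x‖ ≤ Real.sqrt n := by
    intro x hx
    obtain ⟨h1, -⟩ := hsupp hx
    rw [EuclideanSpace.norm_eq]
    apply Real.sqrt_le_sqrt
    calc ∑ i, ‖x i‖ ^ 2 ≤ ∑ _i : Fin n, (1:ℝ) := by
          apply Finset.sum_le_sum
          intro i _
          have h2 : ‖x i‖ ≤ 1 := by rw [Real.norm_eq_abs]; exact h1 i
          nlinarith [norm_nonneg (x i)]
      _ = n := by simp
  -- upper bound for members of S
  have hub : ∀ r ∈ S, r ≤ Real.sqrt n * massF n θ := by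
    rintro r ⟨φ, hφ, rfl⟩
    have heq : ∑ x ∈ θ.support, θ x * φ x
        = ∑ x ∈ θ.support, θ x * (φ x - φ 0) := by
      simp only [mul_sub, Finset.sum_sub_distrib, ← Finset.sum_mul, hsum]
      ring
    rw [heq]
    calc ∑ x ∈ θ.support, θ x * (φ x - φ 0)
        ≤ ∑ x ∈ θ.support, |θ x| * Real.sqrt n := by
          apply Finset.sum_le_sum
          intro x hx
          have hlip : |φ x - φ 0| ≤ ‖x‖ := by
            have := hφ.dist_le_mul x 0
            rw [Real.dist_eq] at this
            simpa [dist_eq_norm] using this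
          calc θ x * (φ x - φ 0) ≤ |θ x * (φ x - φ 0)| := le_abs_self _
            _ = |θ x| * |φ x - φ 0| := abs_mul _ _
            _ ≤ |θ x| * Real.sqrt n :=
                mul_le_mul_of_nonneg_left (hlip.trans (hnormle x hx)) (abs_nonneg _)
      _ = Real.sqrt n * massF n θ := by rw [massF, ← Finset.sum_mul]; ring
  have hbdd : BddAbove S := ⟨_, hub⟩
  have h0S : (0:ℝ) ∈ S := ⟨0, LipschitzWith.const' 0, by simp⟩
  have hGnonneg : 0 ≤ GF n θ := le_csSup hbdd h0S
  have hGle : GF n θ ≤ Real.sqrt n * massF n θ := csSup_le ⟨0, h0S⟩ hub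
  constructor
  · rw [div_le_iff₀ hsq]; linarith
  · -- lower bound: M ≤ 4 k^{2n} G
    have hkpow : (k:ℝ) ≤ (k:ℝ) ^ (2 * n) := by
      have hk1 : (1:ℝ) ≤ (k:ℝ) := by exact_mod_cast hk
      calc (k:ℝ) = (k:ℝ) ^ 1 := (pow_one _).symm
        _ ≤ (k:ℝ) ^ (2 * n) := pow_le_pow_right₀ hk1 (by omega)
    rcases eq_or_ne θ.support ∅ with hs | hs
    · have hM0 : massF n θ = 0 := by rw [massF, hs]; simp
      rw [hM0]
      positivity
    -- positive part of the support is nonempty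
    set Pf := θ.support.filter (fun x => 0 < θ x) with hPf
    have hPne : Pf.Nonempty := by
      by_contra h
      rw [Finset.not_nonempty_iff_eq_empty] at h
      have hneg : ∀ x ∈ θ.support, θ x < 0 := by
        intro x hx
        rcases lt_trichotomy (θ x) 0 with h1 | h1 | h1
        · exact h1
        · exact absurd h1 (Finsupp.mem_support_iff.mp hx)
        · exfalso
          have hxPf : x ∈ Pf := by
            rw [hPf]; exact Finset.mem_filter.mpr ⟨hx, h1⟩
          rw [h] at hxPf
          exact absurd hxPf (Finset.notMem_empty x)
      have : ∑ x ∈ θ.support, θ x < 0 :=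
        Finset.sum_neg hneg (Finset.nonempty_iff_ne_empty.mpr hs)
      linarith [this, hsum.ge]
    set P : Set (EuclideanSpace ℝ (Fin n)) := ↑Pf with hP
    have hPne' : P.Nonempty := by exact_mod_cast hPne
    set φ : EuclideanSpace ℝ (Fin n) → ℝ :=
      fun y => max 0 (1 / (2 * k) - Metric.infDist y P) with hφdef
    have hφlip : LipschitzWith 1 φ := by
      apply LipschitzWith.const_max
      apply LipschitzWith.of_dist_le_mul
      intro a b
      have h := (Metric.lipschitz_infDist_pt P).dist_le_mul a b
      rw [Real.dist_eq] at h ⊢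
      rw [show 1 / (2 * (k:ℝ)) - Metric.infDist a P -
          (1 / (2 * (k:ℝ)) - Metric.infDist b P)
          = -(Metric.infDist a P - Metric.infDist b P) by ring, abs_neg]
      exact h
    -- value on positive part
    have hφpos : ∀ x ∈ θ.support, 0 < θ x → φ x = 1 / (2 * k) := by
      intro x hx hpos
      have hxP : x ∈ P := Finset.mem_filter.mpr ⟨hx, hpos⟩
      simp only [hφdef, Metric.infDist_zero_of_mem hxP, sub_zero]
      rw [max_eq_right]
      positivity
    -- value on negative part
    have hφneg : ∀ x ∈ θ.support, θ x < 0 → φ x = 0 := by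
      intro x hx hneg
      have hfar : 1 / (k:ℝ) ≤ Metric.infDist x P := by
        rw [← not_lt]
        intro hcon
        obtain ⟨p, hp, hd⟩ := (Metric.infDist_lt_iff hPne').mp hcon
        refine absurd hd (not_lt.mpr ?_)
        have hp' : p ∈ Pf := hp
        have hpθ : 0 < θ p := (Finset.mem_filter.mp hp').2
        have hpsupp : p ∈ θ.support := (Finset.mem_filter.mp hp').1
        have hxp : x ≠ p := by
          intro h; rw [h] at hneg; linarith
        exact grid_sep hk (hsupp hx) (hsupp hpsupp) hxp
      simp only [hφdef]
      rw [max_eq_left]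
      have : 1 / (2 * (k:ℝ)) < 1 / k := by
        rw [div_lt_div_iff₀ (by positivity) hk0]; linarith
      linarith
    -- the sum equals M/(4k)
    have hsum' : ∑ x ∈ θ.support, θ x * φ x = massF n θ / (4 * k) := by
      have : ∀ x ∈ θ.support, θ x * φ x = (θ x + |θ x|) / (4 * k) := by
        intro x hx
        rcases lt_trichotomy (θ x) 0 with h1 | h1 | h1
        · rw [hφneg x hx h1, abs_of_neg h1]; ring
        · exact absurd h1 (Finsupp.mem_support_iff.mp hx)
        · rw [hφpos x hx h1, abs_of_pos h1]
          field_simp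
          ring
      rw [Finset.sum_congr rfl this, ← Finset.sum_div, Finset.sum_add_distrib, hsum,
        zero_add, massF]
    have hmem : massF n θ / (4 * k) ∈ S := ⟨φ, hφlip, hsum'.symm⟩
    have hle : massF n θ / (4 * k) ≤ GF n θ := le_csSup hbdd hmem
    have h4k : massF n θ ≤ 4 * k * GF n θ := by
      rw [div_le_iff₀ (by positivity)] at hle
      linarith [hle]
    calc massF n θ ≤ 4 * k * GF n θ := h4k
      _ ≤ 4 * (k:ℝ) ^ (2 * n) * GF n θ := by
          apply mul_le_mul_of_nonneg_right _ hGnonneg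
          linarith
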